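/- arXiv:1412.5523 — 3 statements merged into one kernel-verified Lean document; each statement's English description precedes it below -/
import Mathlib

section
/- The unordered generalized cross ratio is a complete projective invariant of unordered augmented bases: if {y_1,...,y_m} and {x_1,...,x_m} are sets of m ≥ n+2 points in general position in RP^{n-1}, then UC(y_1,...,y_m) = UC(x_1,...,x_m) if and only if there exists a projective transformation Q of RP^{n-1} with Q({y_1,...,y_m}) = {x_1,...,x_m}. -/
open Matrix Set
open scoped LinearAlgebra.Projectivization

/-- The standard projective basis `[e₁], …, [e_{n+1}], [e₁ + ⋯ + e_{n+1}]` of `RP^n`. -/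
noncomputable def stdProjBasis (n : ℕ) : Fin (n + 2) → ℙ ℝ (Fin (n + 1) → ℝ) := fun i =>
  if h : (i : ℕ) < n + 1 then
    Projectivization.mk ℝ (Pi.single (⟨i, h⟩ : Fin (n + 1)) (1 : ℝ))
      (by
        intro hzero
        have := congrFun hzero ⟨i, h⟩
        simp at this)
  else
    Projectivization.mk ℝ (fun _ => (1 : ℝ))
      (by
        intro hzero
        have := congrFun hzero ⟨0, Nat.succ_pos n⟩
        simp at this)

/-- The image of a point of projective space under the projective transformation
induced by a linear automorphism. -/
noncomputable def projMap {n : ℕ} (e : (Fin (n + 1) → ℝ) ≃ₗ[ℝ] (Fin (n + 1) → ℝ)) :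
    ℙ ℝ (Fin (n + 1) → ℝ) → ℙ ℝ (Fin (n + 1) → ℝ) :=
  Projectivization.map (e : (Fin (n + 1) → ℝ) →ₗ[ℝ] (Fin (n + 1) → ℝ)) e.injective

/-- A family of `m` points of `RP^n` is in general position (an augmented basis when
`m ≥ n + 3`) if any `n + 1` of its representative vectors are linearly independent,
i.e. every subset of `n + 2` of the points is a projective basis. -/
def GenPos {n m : ℕ} (y : Fin m → ℙ ℝ (Fin (n + 1) → ℝ)) : Prop :=
  ∀ s : Finset (Fin m), s.card = n + 1 →
    LinearIndependent ℝ (fun i : s => (y i).rep)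

/-- The unordered generalized cross ratio of a family of `m` points of `RP^n`:
the set of all tuples obtained by reordering the points by a permutation `σ`, applying
the (unique) projective transformation carrying the first `n + 2` reordered points to the
standard projective basis, and recording the resulting normalized tuple. -/
noncomputable def UC {n m : ℕ} (y : Fin m → ℙ ℝ (Fin (n + 1) → ℝ)) :
    Set (Fin m → ℙ ℝ (Fin (n + 1) → ℝ)) :=
  {z | ∃ σ : Equiv.Perm (Fin m), ∃ e : (Fin (n + 1) → ℝ) ≃ₗ[ℝ] (Fin (n + 1) → ℝ),
    (∀ i, z i = projMap e (y (σ i))) ∧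
    ∀ i : Fin (n + 2), ∀ h : (i : ℕ) < m, z ⟨i, h⟩ = stdProjBasis n i}

lemma projMap_mk {n : ℕ} (e : (Fin (n + 1) → ℝ) ≃ₗ[ℝ] (Fin (n + 1) → ℝ))
    (v : Fin (n + 1) → ℝ) (hv : v ≠ 0) :
    projMap e (Projectivization.mk ℝ v hv) =
      Projectivization.mk ℝ (e v) (by simp [hv]) := rfl

lemma GenPos.li {n m : ℕ} {y : Fin m → ℙ ℝ (Fin (n + 1) → ℝ)} (hy : GenPos y)
    {φ : Fin (n + 1) → Fin m} (hφ : Function.Injective φ) :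
    LinearIndependent ℝ (fun i => (y (φ i)).rep) := by
  classical
  set s : Finset (Fin m) := Finset.image φ Finset.univ with hs
  have hcard : s.card = n + 1 := by
    rw [hs, Finset.card_image_of_injective _ hφ, Finset.card_univ, Fintype.card_fin]
  have h := hy s hcard
  exact h.comp (fun i : Fin (n + 1) =>
      (⟨φ i, Finset.mem_image_of_mem φ (Finset.mem_univ i)⟩ : s))
    (fun a b hab => hφ (congrArg Subtype.val hab))

lemma exists_normalizer {n m : ℕ} (hm : n + 2 ≤ m) (y : Fin m → ℙ ℝ (Fin (n + 1) → ℝ))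
    (hygen : GenPos y) :
    ∃ e : (Fin (n + 1) → ℝ) ≃ₗ[ℝ] (Fin (n + 1) → ℝ),
      ∀ i : Fin (n + 2), ∀ h : (i : ℕ) < m, projMap e (y ⟨i, h⟩) = stdProjBasis n i := by
  classical
  have hlt : ∀ i : Fin (n + 2), (i : ℕ) < m := fun i => lt_of_lt_of_le i.isLt hm
  set φ0 : Fin (n + 2) → Fin m := fun i => ⟨i, hlt i⟩ with hφ0
  have hφ0inj : Function.Injective φ0 := by
    intro a b hab
    have h2 : ((φ0 a : Fin m) : ℕ) = ((φ0 b : Fin m) : ℕ) := congrArg Fin.val hab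
    exact Fin.ext h2
  set w : Fin (n + 1) → (Fin (n + 1) → ℝ) := fun i => (y (φ0 (Fin.castSucc i))).rep with hwdef
  have hw : LinearIndependent ℝ w :=
    hygen.li (hφ0inj.comp (Fin.castSucc_injective (n + 1)))
  have hcard : Fintype.card (Fin (n + 1)) = Module.finrank ℝ (Fin (n + 1) → ℝ) := by
    simp
  set b := basisOfLinearIndependentOfCardEqFinrank hw hcard with hb
  have hbw : ∀ i, b i = w i := fun i => by
    rw [hb, coe_basisOfLinearIndependentOfCardEqFinrank]
  set u : Fin (n + 1) → ℝ := (y (φ0 (Fin.last (n + 1)))).rep with hu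
  set c : Fin (n + 1) → ℝ := fun i => b.repr u i with hc
  have hsum : ∑ i, c i • w i = u := by
    conv_rhs => rw [← b.sum_repr u]
    exact Finset.sum_congr rfl fun i _ => by rw [hbw]
  have hcne : ∀ j, c j ≠ 0 := by
    intro j hj
    -- construct the family replacing w j by u
    set g : Fin (n + 1) → Fin (n + 2) := fun i =>
      if i = j then Fin.last (n + 1) else Fin.castSucc i with hg
    have hginj : Function.Injective g := by
      intro a bb hab
      by_cases ha : a = j <;> by_cases hb' : bb = j
      · rw [ha, hb']
      · rw [hg] at hab; simp only [if_pos ha, if_neg hb'] at hab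
        exact absurd hab.symm (Fin.ne_last_of_lt (Fin.castSucc_lt_last bb))
      · rw [hg] at hab; simp only [if_neg ha, if_pos hb'] at hab
        exact absurd hab (Fin.ne_last_of_lt (Fin.castSucc_lt_last a))
      · rw [hg] at hab; simp only [if_neg ha, if_neg hb'] at hab
        exact Fin.castSucc_injective _ hab
    have hv : LinearIndependent ℝ (fun i => (y (φ0 (g i))).rep) :=
      hygen.li (hφ0inj.comp hginj)
    set v : Fin (n + 1) → (Fin (n + 1) → ℝ) := fun i => (y (φ0 (g i))).rep with hvdef
    have hvj : v j = u := by simp [hvdef, hg, hu]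
    have hvi : ∀ i, i ≠ j → v i = w i := fun i hi => by
      simp only [hvdef, hg, if_neg hi, hwdef]
    have husum : u = ∑ i ∈ Finset.univ.erase j, c i • w i := by
      rw [← hsum, ← Finset.add_sum_erase _ _ (Finset.mem_univ j), hj, zero_smul, zero_add]
    set gc : Fin (n + 1) → ℝ := fun i => if i = j then 1 else -(c i) with hgc
    have hzero : ∑ i, gc i • v i = 0 := by
      rw [← Finset.add_sum_erase _ _ (Finset.mem_univ j)]
      have h1 : gc j • v j = u := by
        simp only [hgc, if_pos rfl, hvj, one_smul]
      have h2 : ∑ i ∈ Finset.univ.erase j, gc i • v i = -u := by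
        rw [husum, ← Finset.sum_neg_distrib]
        refine Finset.sum_congr rfl fun i hi => ?_
        have hij : i ≠ j := Finset.ne_of_mem_erase hi
        simp only [hgc, if_neg hij, hvi i hij, neg_smul]
      rw [h1, h2, add_neg_cancel]
    have := Fintype.linearIndependent_iff.mp hv gc hzero j
    simp only [hgc, if_pos rfl] at this
    exact one_ne_zero this
  set b2 := b.unitsSMul (fun i => Units.mk0 (c i) (hcne i)) with hb2
  have hb2w : ∀ i, b2 i = c i • w i := fun i => by
    rw [hb2, Module.Basis.unitsSMul_apply, hbw]; rfl
  set e := b2.equiv (Pi.basisFun ℝ (Fin (n + 1))) (Equiv.refl _) with he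
  have heb2 : ∀ i, e (b2 i) = (Pi.single i 1 : Fin (n + 1) → ℝ) := fun i => by
    rw [he, Module.Basis.equiv_apply, Equiv.refl_apply, Pi.basisFun_apply]
  have hew : ∀ i, e (w i) = (c i)⁻¹ • (Pi.single i 1 : Fin (n + 1) → ℝ) := by
    intro i
    have h1 : c i • e (w i) = (Pi.single i 1 : Fin (n + 1) → ℝ) := by
      rw [← _root_.map_smul, ← hb2w, heb2]
    rw [← h1, inv_smul_smul₀ (hcne i)]
  have heu : e u = fun _ => (1 : ℝ) := by
    have h0 : e u = ∑ i, (Pi.single i 1 : Fin (n + 1) → ℝ) := by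
      rw [← hsum, map_sum]
      exact Finset.sum_congr rfl fun i _ => by rw [← hb2w, heb2]
    rw [h0]
    funext jj
    simp [Finset.sum_apply, Pi.single_apply]
  refine ⟨e, fun i h => ?_⟩
  have hyi : y ⟨i, h⟩ = y (φ0 i) := rfl
  rw [hyi, ← Projectivization.mk_rep (y (φ0 i)), projMap_mk]
  by_cases hi : (i : ℕ) < n + 1
  · have hieq : φ0 i = φ0 (Fin.castSucc ⟨i, hi⟩) := by
      apply congrArg; exact Fin.ext rfl
    have hrep : (y (φ0 i)).rep = w ⟨i, hi⟩ := by rw [hieq]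
    rw [stdProjBasis, dif_pos hi]
    refine (Projectivization.mk_eq_mk_iff ℝ _ _ _ _).mpr ?_
    refine ⟨Units.mk0 (c ⟨i, hi⟩)⁻¹ (inv_ne_zero (hcne _)), ?_⟩
    rw [hrep, hew]
    rfl
  · have hieq : φ0 i = φ0 (Fin.last (n + 1)) := by
      apply congrArg
      apply Fin.ext
      have : (i : ℕ) < n + 2 := i.isLt
      simp only [Fin.val_last]
      omega
    have hrep : (y (φ0 i)).rep = u := by rw [hieq, hu]
    rw [stdProjBasis, dif_neg hi]
    refine (Projectivization.mk_eq_mk_iff ℝ _ _ _ _).mpr ⟨1, ?_⟩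
    rw [hrep, heu, one_smul]


lemma projMap_trans {n : ℕ} (e f : (Fin (n + 1) → ℝ) ≃ₗ[ℝ] (Fin (n + 1) → ℝ))
    (p : ℙ ℝ (Fin (n + 1) → ℝ)) :
    projMap (e.trans f) p = projMap f (projMap e p) := by
  induction p using Projectivization.ind with
  | h v hv => rfl

lemma projMap_symm_apply {n : ℕ} (e : (Fin (n + 1) → ℝ) ≃ₗ[ℝ] (Fin (n + 1) → ℝ))
    (p : ℙ ℝ (Fin (n + 1) → ℝ)) :
    projMap e.symm (projMap e p) = p := by
  induction p using Projectivization.ind with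
  | h v hv =>
    rw [projMap_mk, projMap_mk]
    exact (Projectivization.mk_eq_mk_iff ℝ _ _ _ hv).mpr ⟨1, by simp⟩

lemma projMap_inj {n : ℕ} (e : (Fin (n + 1) → ℝ) ≃ₗ[ℝ] (Fin (n + 1) → ℝ)) :
    Function.Injective (projMap e) := fun p q h => by
  rw [← projMap_symm_apply e p, h, projMap_symm_apply]

/-- the unordered generalized cross ratio is a complete projective invariant
of unordered augmented bases: two families of `m ≥ n + 3` points in general position in
`RP^n` have the same unordered generalized cross ratio iff some projective transformation
carries one point set onto the other. -/
theorem UC_complete_invariant {n m : ℕ} (hm : n + 3 ≤ m)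
    (y x : Fin m → ℙ ℝ (Fin (n + 1) → ℝ))
    (hy : Function.Injective y) (hygen : GenPos y)
    (hx : Function.Injective x) (hxgen : GenPos x) :
    UC y = UC x ↔
      ∃ e : (Fin (n + 1) → ℝ) ≃ₗ[ℝ] (Fin (n + 1) → ℝ),
        projMap e '' Set.range y = Set.range x := by
  constructor
  · intro hUC
    obtain ⟨e1, he1⟩ := exists_normalizer (by omega) y hygen
    have hz : (fun i => projMap e1 (y i)) ∈ UC y :=
      ⟨Equiv.refl _, e1, fun i => rfl, he1⟩
    rw [hUC] at hz
    obtain ⟨σ, f, hzf, -⟩ := hz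
    have hkey : ∀ i, projMap (e1.trans f.symm) (y i) = x (σ i) := by
      intro i
      have h2 : projMap e1 (y i) = projMap f (x (σ i)) := hzf i
      rw [projMap_trans, h2, projMap_symm_apply]
    refine ⟨e1.trans f.symm, ?_⟩
    ext p
    constructor
    · rintro ⟨q, ⟨i, rfl⟩, rfl⟩
      exact ⟨σ i, (hkey i).symm⟩
    · rintro ⟨i, rfl⟩
      exact ⟨y (σ.symm i), ⟨_, rfl⟩, by rw [hkey (σ.symm i), Equiv.apply_symm_apply]⟩
  · rintro ⟨e, he⟩
    have h1 : ∀ i, ∃ j, x j = projMap e (y i) := by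
      intro i
      have : projMap e (y i) ∈ Set.range x := he ▸ ⟨y i, ⟨i, rfl⟩, rfl⟩
      exact this
    choose τf hτf using h1
    have hτinj : Function.Injective τf := by
      intro a b hab
      apply hy
      apply projMap_inj e
      rw [← hτf a, ← hτf b, hab]
    let τ : Equiv.Perm (Fin m) := Equiv.ofBijective τf (Finite.injective_iff_bijective.mp hτinj)
    have hτ : ∀ i, projMap e (y i) = x (τ i) := fun i => (hτf i).symm
    have hτ' : ∀ i, y i = projMap e.symm (x (τ i)) := fun i => by
      rw [← hτ, projMap_symm_apply]
    ext z
    constructor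
    · rintro ⟨σ, f, hzf, hnorm⟩
      refine ⟨σ.trans τ, e.symm.trans f, fun i => ?_, hnorm⟩
      rw [hzf i, hτ' (σ i), ← projMap_trans]
      rfl
    · rintro ⟨σ, f, hzf, hnorm⟩
      refine ⟨σ.trans τ.symm, e.trans f, fun i => ?_, hnorm⟩
      rw [hzf i, ← Equiv.apply_symm_apply τ (σ i), ← hτ (τ.symm (σ i)), ← projMap_trans]
      rfl
end

section
/- Let E ≤ SL_8(ℝ) be the image of the map ρ(a,b,c,d,e,f,g) which is the 8×8 block unitriangular matrix [[I_4, A],[0, I_4]] with A = [[0,c,g,f],[c,b,f,e],[b,a,e,d],[a,g,d,0]]. Then for every nonidentity element x of E, rank(x − I_8) ≥ 2; i.e., E contains no element x ≠ I with rank(x − I_8) = 1, and hence E has no one-parameter subgroup of tier 1. -/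
open Matrix

/-- The symmetric-pattern `4 × 4` block `A(a,b,c,d,e,f,g)`, with
`(a,b,c,d,e,f,g) = (p 0, …, p 6)`. -/
def Ablock (p : Fin 7 → ℝ) : Matrix (Fin 4) (Fin 4) ℝ :=
  !![0, p 2, p 6, p 5;
     p 2, p 1, p 5, p 4;
     p 1, p 0, p 4, p 3;
     p 0, p 6, p 3, 0]

theorem Ablock_det (p : Fin 7 → ℝ) :
    (Matrix.fromBlocks (1 : Matrix (Fin 4) (Fin 4) ℝ) (Ablock p) 0
      (1 : Matrix (Fin 4) (Fin 4) ℝ)).det = 1 := by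
  simp [Matrix.det_fromBlocks_zero₂₁]

/-- The map `ρ : ℝ⁷ → SL₈(ℝ)` (coordinates indexed by `Fin 4 ⊕ Fin 4`), whose image is
the abelian group `E`. -/
def rhoE (p : Fin 7 → ℝ) : Matrix.SpecialLinearGroup (Fin 4 ⊕ Fin 4) ℝ :=
  ⟨Matrix.fromBlocks (1 : Matrix (Fin 4) (Fin 4) ℝ) (Ablock p) 0
      (1 : Matrix (Fin 4) (Fin 4) ℝ), Ablock_det p⟩

lemma rank_submatrix_le' {ι : Type*} [Fintype ι] [DecidableEq ι] (M : Matrix ι ι ℝ)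
    (f g : Fin 2 → ι) : (M.submatrix f g).rank ≤ M.rank := by
  have key : M.submatrix f g =
      ((1 : Matrix ι ι ℝ).submatrix f (Equiv.refl ι)) * M *
        ((1 : Matrix ι ι ℝ).submatrix (Equiv.refl ι) g) := by
    rw [Matrix.mul_submatrix_one, Matrix.one_submatrix_mul]
    simp
  rw [key]
  exact le_trans (Matrix.rank_mul_le_left _ _) (Matrix.rank_mul_le_right _ _)

lemma rank_ge_two {ι : Type*} [Fintype ι] [DecidableEq ι] (M : Matrix ι ι ℝ)
    (r₁ r₂ c₁ c₂ : ι) (h : M r₁ c₁ * M r₂ c₂ - M r₁ c₂ * M r₂ c₁ ≠ 0) :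
    2 ≤ M.rank := by
  have hdet : (M.submatrix ![r₁, r₂] ![c₁, c₂]).det ≠ 0 := by
    rw [Matrix.det_fin_two]
    simpa [Matrix.det_fin_two] using h
  have h2 : (M.submatrix ![r₁, r₂] ![c₁, c₂]).rank = 2 := by
    rw [Matrix.rank_of_isUnit _ ((Matrix.isUnit_iff_isUnit_det _).mpr
      (isUnit_iff_ne_zero.mpr hdet))]
    simp
  have := rank_submatrix_le' M ![r₁, r₂] ![c₁, c₂]
  omega

lemma E_rank_ge_two (p : Fin 7 → ℝ) (hp : rhoE p ≠ 1) :
    2 ≤ ((rhoE p : Matrix (Fin 4 ⊕ Fin 4) (Fin 4 ⊕ Fin 4) ℝ) - 1).rank := by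
  set M : Matrix (Fin 4 ⊕ Fin 4) (Fin 4 ⊕ Fin 4) ℝ :=
    (rhoE p : Matrix (Fin 4 ⊕ Fin 4) (Fin 4 ⊕ Fin 4) ℝ) - 1 with hM
  by_cases h2 : p 2 = 0
  swap
  · exact rank_ge_two M (Sum.inl 0) (Sum.inl 1) (Sum.inr 0) (Sum.inr 1)
      (by simpa [hM, rhoE, Ablock, Matrix.sub_apply, Matrix.one_apply,
        mul_self_eq_zero] using h2)
  by_cases h3 : p 3 = 0
  swap
  · exact rank_ge_two M (Sum.inl 2) (Sum.inl 3) (Sum.inr 2) (Sum.inr 3)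
      (by simpa [hM, rhoE, Ablock, Matrix.sub_apply, Matrix.one_apply,
        mul_self_eq_zero] using h3)
  by_cases h1 : p 1 = 0
  swap
  · exact rank_ge_two M (Sum.inl 1) (Sum.inl 2) (Sum.inr 0) (Sum.inr 1)
      (by simpa [hM, rhoE, Ablock, Matrix.sub_apply, Matrix.one_apply, h2,
        mul_self_eq_zero] using h1)
  by_cases h4 : p 4 = 0
  swap
  · exact rank_ge_two M (Sum.inl 1) (Sum.inl 2) (Sum.inr 2) (Sum.inr 3)
      (by simpa [hM, rhoE, Ablock, Matrix.sub_apply, Matrix.one_apply, h3,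
        mul_self_eq_zero] using h4)
  by_cases h0 : p 0 = 0
  swap
  · exact rank_ge_two M (Sum.inl 2) (Sum.inl 3) (Sum.inr 0) (Sum.inr 1)
      (by simpa [hM, rhoE, Ablock, Matrix.sub_apply, Matrix.one_apply, h1,
        mul_self_eq_zero] using h0)
  by_cases h5 : p 5 = 0
  swap
  · exact rank_ge_two M (Sum.inl 0) (Sum.inl 1) (Sum.inr 2) (Sum.inr 3)
      (by simpa [hM, rhoE, Ablock, Matrix.sub_apply, Matrix.one_apply, h4,
        mul_self_eq_zero] using h5)
  by_cases h6 : p 6 = 0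
  swap
  · exact rank_ge_two M (Sum.inl 0) (Sum.inl 3) (Sum.inr 1) (Sum.inr 2)
      (by simpa [hM, rhoE, Ablock, Matrix.sub_apply, Matrix.one_apply, h2, h3,
        mul_self_eq_zero] using h6)
  exfalso
  apply hp
  apply Subtype.ext
  show Matrix.fromBlocks 1 (Ablock p) 0 1 = 1
  rw [← Matrix.fromBlocks_one]
  ext i j
  fin_cases i <;> fin_cases j <;>
    simp [Ablock, Matrix.vecHead, Matrix.vecTail, h0, h1, h2, h3, h4, h5, h6]

/-- every nonidentity element `x` of `E = im ρ` has `rank (x − I₈) ≥ 2`;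
in particular `E` has no one-parameter subgroup of tier 1. -/
theorem E_no_tier_one :
    (∀ p : Fin 7 → ℝ, rhoE p ≠ 1 →
      2 ≤ ((rhoE p : Matrix (Fin 4 ⊕ Fin 4) (Fin 4 ⊕ Fin 4) ℝ) - 1).rank) ∧
    ¬ ∃ φ : Multiplicative ℝ →* Matrix.SpecialLinearGroup (Fin 4 ⊕ Fin 4) ℝ,
        Set.range φ ⊆ Set.range rhoE ∧
        (⨆ t : Multiplicative ℝ,
          (((φ t : Matrix (Fin 4 ⊕ Fin 4) (Fin 4 ⊕ Fin 4) ℝ) - 1).rank : ℕ∞)) = 1 := by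
  constructor
  · exact E_rank_ge_two
  · rintro ⟨φ, hsub, hsup⟩
    have h0 : ∀ t : Multiplicative ℝ,
        ((φ t : Matrix (Fin 4 ⊕ Fin 4) (Fin 4 ⊕ Fin 4) ℝ) - 1).rank = 0 := by
      intro t
      obtain ⟨p, hp⟩ := hsub ⟨t, rfl⟩
      by_cases h : rhoE p = 1
      · rw [← hp, h]
        simp
      · have h2 := E_rank_ge_two p h
        rw [hp] at h2
        have hle := le_iSup (fun s : Multiplicative ℝ =>
          (((φ s : Matrix (Fin 4 ⊕ Fin 4) (Fin 4 ⊕ Fin 4) ℝ) - 1).rank : ℕ∞)) t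
        rw [hsup] at hle
        have : ((φ t : Matrix (Fin 4 ⊕ Fin 4) (Fin 4 ⊕ Fin 4) ℝ) - 1).rank ≤ 1 := by
          exact_mod_cast hle
        omega
    simp [h0] at hsup
end

section
/- The image M_5 of the map μ_5(a,b,c,d) ∈ SL_5(ℝ), with identity diagonal and nonzero entries a in (1,2), a²/2 in (1,4), b in (1,5), a in (2,4), c in (3,4), d in (3,5), is an abelian subgroup of SL_5(ℝ) of dimension 4 isomorphic to (ℝ⁴, +), and M_5 is not a flat group: it is not equal to the intersection of SL_5(ℝ) with any affine subspace of the 5×5 matrices. -/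
open Matrix

/-- The map `μ₅ : ℝ⁴ → SL₅(ℝ)` (valued in matrices), with `(a,b,c,d) = (p 0, p 1, p 2, p 3)`:
identity diagonal and nonzero entries `a` at `(1,2)`, `a²/2` at `(1,4)`, `b` at `(1,5)`,
`a` at `(2,4)`, `c` at `(3,4)`, `d` at `(3,5)`. -/
noncomputable def mu5 (p : Fin 4 → ℝ) : Matrix (Fin 5) (Fin 5) ℝ :=
  !![1, p 0, 0, p 0 ^ 2 / 2, p 1;
     0, 1, 0, p 0, 0;
     0, 0, 1, p 2, p 3;
     0, 0, 0, 1, 0;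
     0, 0, 0, 0, 1]

lemma mu5_hom (p q : Fin 4 → ℝ) : mu5 (p + q) = mu5 p * mu5 q := by
  ext i j
  fin_cases i <;> fin_cases j <;>
    simp [mu5, Matrix.mul_apply, Fin.sum_univ_five, Matrix.vecHead, Matrix.vecTail,
      Function.comp] <;> ring

/-- `M₅ = im μ₅` is an abelian subgroup of `SL₅(ℝ)` of dimension 4,
isomorphic to `(ℝ⁴, +)` (μ₅ is an injective homomorphism landing in `SL₅(ℝ)` with
commuting image), and `M₅` is not flat: it is not the intersection of `SL₅(ℝ)` with any
linear subspace of the `5 × 5` matrices. -/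
theorem M5_abelian_not_flat :
    (∀ p : Fin 4 → ℝ, (mu5 p).det = 1) ∧
    (∀ p q : Fin 4 → ℝ, mu5 (p + q) = mu5 p * mu5 q) ∧
    Function.Injective mu5 ∧
    (∀ p q : Fin 4 → ℝ, mu5 p * mu5 q = mu5 q * mu5 p) ∧
    ¬ ∃ V : Submodule ℝ (Matrix (Fin 5) (Fin 5) ℝ),
        Set.range mu5 = (V : Set (Matrix (Fin 5) (Fin 5) ℝ)) ∩ {A | A.det = 1} := by
  refine ⟨?_, mu5_hom, ?_, ?_, ?_⟩
  · intro p
    norm_num [mu5, Matrix.det_succ_row_zero, Fin.sum_univ_succ, Matrix.cons_val_two, Matrix.cons_val_three, Matrix.cons_val_four, Matrix.vecHead, Matrix.vecTail]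
  · intro p q h
    funext i
    fin_cases i
    · have := congrFun (congrFun h 0) 1; simpa [mu5] using this
    · have := congrFun (congrFun h 0) 4; simpa [mu5] using this
    · have := congrFun (congrFun h 2) 3; simpa [mu5] using this
    · have := congrFun (congrFun h 2) 4; simpa [mu5] using this
  · intro p q
    rw [← mu5_hom, ← mu5_hom, add_comm]
  · rintro ⟨V, hV⟩
    have hA : mu5 ![1,0,0,0] ∈ V := (hV ▸ Set.mem_range_self _).1
    have hI : mu5 0 ∈ V := (hV ▸ Set.mem_range_self _).1
    set B : Matrix (Fin 5) (Fin 5) ℝ := (2:ℝ) • mu5 ![1,0,0,0] - mu5 0 with hB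
    have hBV : B ∈ V := sub_mem (V.smul_mem _ hA) hI
    have hBdet : B.det = 1 := by
      have : B = !![1, 2, 0, 1, 0; 0, 1, 0, 2, 0; 0, 0, 1, 0, 0; 0, 0, 0, 1, 0; 0, 0, 0, 0, 1] := by
        ext i j; fin_cases i <;> fin_cases j <;> norm_num [hB, mu5, Matrix.cons_val_two, Matrix.cons_val_three, Matrix.cons_val_four, Matrix.vecHead, Matrix.vecTail]
      rw [this]
      norm_num [Matrix.det_succ_row_zero, Fin.sum_univ_succ, Matrix.cons_val_two, Matrix.cons_val_three, Matrix.cons_val_four, Matrix.vecHead, Matrix.vecTail]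
    have : B ∈ Set.range mu5 := hV ▸ ⟨hBV, hBdet⟩
    obtain ⟨q, hq⟩ := this
    have h01 : q 0 = 2 := by
      have := congrFun (congrFun hq 0) 1; simpa [mu5, hB] using this
    have h03 : q 0 ^ 2 / 2 = 1 := by
      have := congrFun (congrFun hq 0) 3; simpa [mu5, hB] using this
    rw [h01] at h03; norm_num at h03
end
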